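/- (Singularity criterion of type D, k = n; the key step of the main theorem for D_n/P(α_n).) Let n ≥ 2 and let a_1,…,a_n be nonnegative integers. Then for every integer t, there exists a positive root α ∈ Φ⁺_D with ⟨w(t), α⟩ = 0 if and only if t belongs to the step-matrix entry set S^D_{n,a}. -/
import Mathlib

open Finset

/-- The positive roots of type `Dₙ`: `eₚ+e_q` and `eₚ-e_q` (`p<q`). -/
def PhiD (n : ℕ) : Set (Fin n → ℝ) :=
  {α | ∃ p q : Fin n, p < q ∧
      α = fun i => (if i = p then (1:ℝ) else 0) + (if i = q then 1 else 0)} ∪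
  {α | ∃ p q : Fin n, p < q ∧
      α = fun i => (if i = p then (1:ℝ) else 0) - (if i = q then 1 else 0)}

/-- Standard inner product on `ℝⁿ`. -/
noncomputable def ip (n : ℕ) (v w : Fin n → ℝ) : ℝ := ∑ i, v i * w i

/-- The coordinate form of the weight `λ+ρ-tλ_n` for type `Dₙ`
(coordinates are indexed one-based). -/
noncomputable def wDn (n : ℕ) (a : ℕ → ℤ) (t : ℤ) : Fin n → ℝ := fun i =>
  if i.val + 1 = n then ((a n : ℝ) - (a (n - 1) : ℝ)) / 2 - (t : ℝ) / 2
  else (∑ u ∈ Icc (i.val + 1) (n - 2), (a u : ℝ)) + ((a (n - 1) : ℝ) + (a n : ℝ)) / 2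
    + ((n : ℝ) - (i.val + 1)) - (t : ℝ) / 2

/-- The step-matrix entry set `S^D_{n,a}` (the case `k = n`). -/
def SDn (n : ℕ) (a : ℕ → ℤ) : Set ℚ :=
  {x | ∃ i j : ℕ, 1 ≤ i ∧ i < j ∧ j ≤ n ∧
    x = (∑ u ∈ Icc (n + 1 - i) n, (a u : ℚ))
      + (∑ u ∈ Icc (n + 1 - j) (n - 2), (a u : ℚ)) + i + j - 2}

lemma sum_plus_root {n : ℕ} (v : Fin n → ℝ) (p q : Fin n) :
    ∑ i, v i * ((if i = p then (1:ℝ) else 0) + (if i = q then 1 else 0)) = v p + v q := by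
  simp [mul_add, mul_ite, mul_one, mul_zero, Finset.sum_add_distrib, Finset.sum_ite_eq']

lemma sum_minus_root {n : ℕ} (v : Fin n → ℝ) (p q : Fin n) :
    ∑ i, v i * ((if i = p then (1:ℝ) else 0) - (if i = q then 1 else 0)) = v p - v q := by
  simp [mul_sub, mul_ite, mul_one, mul_zero, Finset.sum_sub_distrib, Finset.sum_ite_eq']

lemma sum_Icc_split (a : ℕ → ℝ) {m k l : ℕ} (h1 : m ≤ k+1) (h2 : k ≤ l) :
    ∑ u ∈ Icc m k, a u + ∑ u ∈ Icc (k+1) l, a u = ∑ u ∈ Icc m l, a u := by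
  rw [← Finset.Ico_add_one_right_eq_Icc, ← Finset.Ico_add_one_right_eq_Icc, ← Finset.Ico_add_one_right_eq_Icc]
  exact Finset.sum_Ico_consecutive _ h1 (by omega)

lemma wDn_plus (n : ℕ) (hn : 2 ≤ n) (a : ℕ → ℤ) (t : ℤ) (p q : Fin n)
    (hpq : (p:ℕ) < (q:ℕ)) :
    wDn n a t p + wDn n a t q =
      ((∑ u ∈ Icc ((p:ℕ)+1) (n-2), a u + ∑ u ∈ Icc ((q:ℕ)+1) n, a u : ℤ) : ℝ)
        + (2*(n:ℝ) - ((p:ℕ)+1) - ((q:ℕ)+1)) - t := by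
  obtain ⟨m, rfl⟩ : ∃ m, n = m + 2 := ⟨n - 2, by omega⟩
  have hq : (q:ℕ) < m + 2 := q.isLt
  have hp : (p:ℕ) + 1 ≠ m + 2 := by omega
  unfold wDn
  rw [if_neg hp]
  simp only [show m+2-2 = m from by omega, show m+2-1 = m+1 from by omega]
  by_cases h : (q:ℕ) + 1 = m + 2
  · rw [if_pos h]
    rw [show Icc ((q:ℕ)+1) (m+2) = {m+2} from by rw [h, Finset.Icc_self]]
    rw [Finset.sum_singleton]
    have hqv : ((q:ℕ):ℝ) = (m:ℝ) + 1 := by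
      exact_mod_cast congrArg (Nat.cast : ℕ → ℝ) (by omega : (q:ℕ) = m + 1)
    push_cast
    rw [hqv]; ring
  · rw [if_neg h]
    have e1 : (∑ u ∈ Icc ((q:ℕ)+1) (m+2), (a u : ℝ))
        = ∑ u ∈ Icc ((q:ℕ)+1) m, (a u : ℝ) + (a (m+1) : ℝ) + (a (m+2) : ℝ) := by
      rw [Finset.sum_Icc_succ_top (by omega), Finset.sum_Icc_succ_top (by omega)]
    rw [show ((∑ u ∈ Icc ((p:ℕ)+1) m, a u + ∑ u ∈ Icc ((q:ℕ)+1) (m+2), a u : ℤ) : ℝ)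
        = (∑ u ∈ Icc ((p:ℕ)+1) m, (a u:ℝ)) + ∑ u ∈ Icc ((q:ℕ)+1) (m+2), (a u:ℝ) from by
          push_cast; ring]
    rw [e1]
    push_cast
    ring

lemma wDn_minus (n : ℕ) (hn : 2 ≤ n) (a : ℕ → ℤ) (t : ℤ) (p q : Fin n)
    (hpq : (p:ℕ) < (q:ℕ)) :
    wDn n a t p - wDn n a t q =
      ((∑ u ∈ Icc ((p:ℕ)+1) (q:ℕ), a u : ℤ) : ℝ) + ((q:ℕ) - (p:ℕ) : ℝ) := by
  obtain ⟨m, rfl⟩ : ∃ m, n = m + 2 := ⟨n - 2, by omega⟩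
  have hq : (q:ℕ) < m + 2 := q.isLt
  have hp : (p:ℕ) + 1 ≠ m + 2 := by omega
  unfold wDn
  rw [if_neg hp]
  simp only [show m+2-2 = m from by omega, show m+2-1 = m+1 from by omega]
  by_cases h : (q:ℕ) + 1 = m + 2
  · rw [if_pos h]
    have hqm : (q:ℕ) = m + 1 := by omega
    rw [hqm]
    rw [Finset.sum_Icc_succ_top (by omega : (p:ℕ)+1 ≤ m+1)]
    push_cast
    ring
  · rw [if_neg h]
    have e1 := sum_Icc_split (fun u => (a u : ℝ)) (by omega : (p:ℕ)+1 ≤ (q:ℕ)+1)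
      (by omega : (q:ℕ) ≤ m)
    push_cast
    rw [← e1]
    ring

/-- Singularity criterion of type `D`, `k = n`: `λ+ρ-tλ_n` is singular iff `t` is an
entry of the step matrix `T^D_{n,λ}`. -/
theorem singular_criterion_D_eq (n : ℕ) (hn : 2 ≤ n)
    (a : ℕ → ℤ) (ha : ∀ u, 1 ≤ u → u ≤ n → 0 ≤ a u) (t : ℤ) :
    (∃ α ∈ PhiD n, ip n (wDn n a t) α = 0) ↔ (t : ℚ) ∈ SDn n a := by
  constructor
  · rintro ⟨α, hα, hip⟩
    rcases hα with ⟨p, q, hpq, rfl⟩ | ⟨p, q, hpq, rfl⟩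
    · -- plus root
      have hpq' : (p:ℕ) < (q:ℕ) := hpq
      simp only [ip] at hip
      rw [sum_plus_root, wDn_plus n hn a t p q hpq'] at hip
      have hq : (q:ℕ) < n := q.isLt
      have ht : t = (∑ u ∈ Icc ((p:ℕ)+1) (n-2), a u + ∑ u ∈ Icc ((q:ℕ)+1) n, a u)
          + (2*(n:ℤ) - ((p:ℕ)+1) - ((q:ℕ)+1)) := by
        have : (t:ℝ) = ((∑ u ∈ Icc ((p:ℕ)+1) (n-2), a u + ∑ u ∈ Icc ((q:ℕ)+1) n, a u
            + (2*(n:ℤ) - ((p:ℕ)+1) - ((q:ℕ)+1)) : ℤ) : ℝ) := by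
          push_cast at hip ⊢
          linarith
        exact_mod_cast this
      refine ⟨n - (q:ℕ), n - (p:ℕ), by omega, by omega, by omega, ?_⟩
      rw [show n + 1 - (n - (q:ℕ)) = (q:ℕ)+1 from by omega,
        show n + 1 - (n - (p:ℕ)) = (p:ℕ)+1 from by omega]
      have h1 : ((n - (q:ℕ) : ℕ) : ℚ) = (n:ℚ) - (q:ℕ) := by
        push_cast [Nat.cast_sub (le_of_lt hq)]; ring
      have h2 : ((n - (p:ℕ) : ℕ) : ℚ) = (n:ℚ) - (p:ℕ) := by
        push_cast [Nat.cast_sub (le_of_lt p.isLt)]; ring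
      rw [ht, h1, h2]
      push_cast
      ring
    · -- minus root: impossible
      exfalso
      have hpq' : (p:ℕ) < (q:ℕ) := hpq
      simp only [ip] at hip
      rw [sum_minus_root, wDn_minus n hn a t p q hpq'] at hip
      have hs : (0:ℤ) ≤ ∑ u ∈ Icc ((p:ℕ)+1) (q:ℕ), a u := by
        apply Finset.sum_nonneg
        intro u hu
        rw [Finset.mem_Icc] at hu
        exact ha u (by omega) (by have := q.isLt; omega)
      have hd : (0:ℝ) < ((q:ℕ):ℝ) - ((p:ℕ):ℝ) := by
        have : ((p:ℕ):ℝ) < ((q:ℕ):ℝ) := by exact_mod_cast hpq'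
        linarith
      have hs' : (0:ℝ) ≤ ((∑ u ∈ Icc ((p:ℕ)+1) (q:ℕ), a u : ℤ) : ℝ) := by exact_mod_cast hs
      linarith
  · rintro ⟨i, j, hi, hij, hjn, hx⟩
    have hin : i ≤ n := by omega
    set p : Fin n := ⟨n - j, by omega⟩ with hp
    set q : Fin n := ⟨n - i, by omega⟩ with hq
    have hpq' : (p:ℕ) < (q:ℕ) := by simp only [hp, hq]; omega
    refine ⟨fun k => (if k = p then (1:ℝ) else 0) + (if k = q then 1 else 0),
      Or.inl ⟨p, q, hpq', rfl⟩, ?_⟩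
    simp only [ip]
    rw [sum_plus_root, wDn_plus n hn a t p q hpq']
    have hpv : (p:ℕ) = n - j := rfl
    have hqv : (q:ℕ) = n - i := rfl
    rw [hpv, hqv]
    have ht : t = (∑ u ∈ Icc ((n-j)+1) (n-2), a u + ∑ u ∈ Icc ((n-i)+1) n, a u)
        + (2*(n:ℤ) - ((n-j:ℕ)+1) - ((n-i:ℕ)+1)) := by
      have h1 : ((n - j : ℕ) : ℚ) = (n:ℚ) - j := Nat.cast_sub hjn
      have h2 : ((n - i : ℕ) : ℚ) = (n:ℚ) - i := Nat.cast_sub hin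
      have h1' : ((n - j : ℕ) : ℤ) = (n:ℤ) - j := Nat.cast_sub hjn
      have h2' : ((n - i : ℕ) : ℤ) = (n:ℤ) - i := Nat.cast_sub hin
      rw [show n + 1 - i = (n-i)+1 from by omega, show n + 1 - j = (n-j)+1 from by omega] at hx
      have : (t:ℚ) = (((∑ u ∈ Icc ((n-j)+1) (n-2), a u + ∑ u ∈ Icc ((n-i)+1) n, a u)
          + (2*(n:ℤ) - ((n-j:ℕ)+1) - ((n-i:ℕ)+1)) : ℤ) : ℚ) := by
        rw [hx]
        push_cast [h1, h2, h1', h2']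
        ring
      exact_mod_cast this
    rw [ht]
    push_cast [Nat.cast_sub hjn, Nat.cast_sub hin]
    ring
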